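/- Let s0,…,s4 be the Bäcklund transformations of the A7^(2) system and define S0 := s0∘s1, S1 := s2, S2 := s3, S3 := s4. Let Φ_ε denote the change of parameters and variables α0 = 1/ε + A0, α1 = −1/ε, α2 = A1, α3 = A2, α4 = A3, t = T/ε, x = εX, y = Y/ε, z = √ε·Z, w = W/√ε. Then: (i) each S_i acts on the new parameters (A0,A1,A2,A3) as a reflection (its action on (A0,A1,A2,A3) does not involve ε); and (ii) the transformation S_i conjugated by Φ_ε, i.e. expressed in the variables (X,Y,Z,W,T) and parameters (A0,A1,A2,A3), converges pointwise as ε → 0 to the corresponding generator S_i of the W(C3^(1)) Bäcklund transformation group of the C3^(1) system, namely S0: (X,Y,Z,W,T;A) ↦ (−(X+A0/Y+1/Y²), −Y, √(−1)·Z, W/√(−1), −T; −A0, A1+A0, A2, A3), S1: (X, Y−A1/X, Z, W, T; A0+2A1, −A1, A2+A1, A3), S2: (X+A2/(Y+W²−T), Y, Z+2A2W/(Y+W²−T), W, T; A0, A1+A2, −A2, A3+2A2), S3: (X, Y, Z, W−A3/Z, T; A0, A1, A2+A3, −A3). -/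

import Mathlib

/- STATEMENT 6: degeneration of the A7^(2) Bäcklund transformations to those of
the C3^(1) system.  The substitution Φ_ε (with ε = δ², √ε := δ) is
α0 = 1/δ² + A0, α1 = −1/δ², α2 = A1, α3 = A2, α4 = A3,
t = T/δ², x = δ²X, y = Y/δ², z = δZ, w = W/δ.
Its inverse reads the new data off a state via X = −α1x, Y = −y/α1, Z = z/δ',
W = δ'w, T = −t/α1, A = (α0+α1, α2, α3, α4), where δ' is an appropriate square
root of −1/α1 (δ' = −iδ for S0, δ' = δ(1−A1δ²)^{-1/2} for S1, δ' = δ for S2,S3).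
Claim (i): each conjugated S_i acts on (A0,A1,A2,A3) exactly by the stated
reflection (no ε-dependence).  Claim (ii): each conjugated S_i converges
pointwise, as δ → 0, to the corresponding C3^(1) Bäcklund transformation. -/

open Complex Filter Topology

/-- state of the A7^(2) system: variables (x,y,z,w,t) and parameters (α0,…,α4). -/
abbrev StA7 := (ℂ × ℂ × ℂ × ℂ × ℂ) × (ℂ × ℂ × ℂ × ℂ × ℂ)

/-- state of the C3^(1) system: variables (X,Y,Z,W,T) and parameters (A0,…,A3). -/
abbrev StC3 := (ℂ × ℂ × ℂ × ℂ × ℂ) × (ℂ × ℂ × ℂ × ℂ)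

noncomputable def s0A7 : StA7 → StA7
  | ((x, y, z, w, t), (a0, a1, a2, a3, a4)) =>
    ((x + a0/(y-1), y, z, w, t), (-a0, a1, a2+a0, a3, a4))

noncomputable def s1A7 : StA7 → StA7
  | ((x, y, z, w, t), (a0, a1, a2, a3, a4)) =>
    ((x + a1/y, y, z, w, t), (a0, -a1, a2+a1, a3, a4))

noncomputable def s2A7 : StA7 → StA7
  | ((x, y, z, w, t), (a0, a1, a2, a3, a4)) =>
    ((x, y - a2/x, z, w, t), (a0+a2, a1+a2, -a2, a3+a2, a4))

noncomputable def s3A7 : StA7 → StA7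
  | ((x, y, z, w, t), (a0, a1, a2, a3, a4)) =>
    ((x + a3/(y + w^2 - t), y, z + 2*a3*w/(y + w^2 - t), w, t),
      (a0, a1, a2+a3, -a3, a4+2*a3))

noncomputable def s4A7 : StA7 → StA7
  | ((x, y, z, w, t), (a0, a1, a2, a3, a4)) =>
    ((x, y, z, w - a4/z, t), (a0, a1, a2, a3+a4, -a4))

/-- The substitution Φ (with ε = δ²). -/
noncomputable def Phi (δ : ℂ) : StC3 → StA7
  | ((X, Y, Z, W, T), (A0, A1, A2, A3)) =>
    ((δ^2*X, Y/δ^2, δ*Z, W/δ, T/δ^2), (1/δ^2 + A0, -(1/δ^2), A1, A2, A3))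

/-- Recovering the C3^(1) data from an A7^(2) state, using the square root `δ'`
of `−1/α1`. -/
noncomputable def PhiInv (δ' : ℂ) : StA7 → StC3
  | ((x, y, z, w, t), (a0, a1, a2, a3, a4)) =>
    ((-(a1*x), -(y/a1), z/δ', δ'*w, -(t/a1)), (a0 + a1, a2, a3, a4))

set_option maxHeartbeats 1600000 in
theorem degeneration_backlund_A7_to_C3 (A0 A1 A2 A3 : ℂ)
    (hrel : A0 + 2*A1 + 2*A2 + A3 = 1)
    (X Y Z W T : ℂ) :
    -- (i) exact reflection action on the parameters (A0,A1,A2,A3)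
    (∀ δ : ℂ, δ ≠ 0 →
      (PhiInv (-(I*δ)) (s1A7 (s0A7 (Phi δ ((X,Y,Z,W,T),(A0,A1,A2,A3)))))).2
        = (-A0, A1+A0, A2, A3) ∧
      (PhiInv (δ * (1 - A1*δ^2) ^ (-(1:ℂ)/2))
          (s2A7 (Phi δ ((X,Y,Z,W,T),(A0,A1,A2,A3))))).2
        = (A0+2*A1, -A1, A2+A1, A3) ∧
      (PhiInv δ (s3A7 (Phi δ ((X,Y,Z,W,T),(A0,A1,A2,A3))))).2
        = (A0, A1+A2, -A2, A3+2*A2) ∧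
      (PhiInv δ (s4A7 (Phi δ ((X,Y,Z,W,T),(A0,A1,A2,A3))))).2
        = (A0, A1, A2+A3, -A3)) ∧
    -- (ii) pointwise convergence, as δ → 0, to the C3^(1) Bäcklund
    -- transformations S0, S1, S2, S3
    (Y ≠ 0 →
      Tendsto
        (fun δ : ℂ =>
          PhiInv (-(I*δ)) (s1A7 (s0A7 (Phi δ ((X,Y,Z,W,T),(A0,A1,A2,A3))))))
        (𝓝[≠] 0)
        (𝓝 (((-(X + A0/Y + 1/Y^2), -Y, I*Z, W/I, -T),
              (-A0, A1+A0, A2, A3)) : StC3))) ∧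
    (X ≠ 0 →
      Tendsto
        (fun δ : ℂ =>
          PhiInv (δ * (1 - A1*δ^2) ^ (-(1:ℂ)/2))
            (s2A7 (Phi δ ((X,Y,Z,W,T),(A0,A1,A2,A3)))))
        (𝓝[≠] 0)
        (𝓝 (((X, Y - A1/X, Z, W, T), (A0+2*A1, -A1, A2+A1, A3)) : StC3))) ∧
    (Y + W^2 - T ≠ 0 →
      Tendsto
        (fun δ : ℂ =>
          PhiInv δ (s3A7 (Phi δ ((X,Y,Z,W,T),(A0,A1,A2,A3)))))
        (𝓝[≠] 0)
        (𝓝 (((X + A2/(Y + W^2 - T), Y, Z + 2*A2*W/(Y + W^2 - T), W, T),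
              (A0, A1+A2, -A2, A3+2*A2)) : StC3))) ∧
    (Z ≠ 0 →
      Tendsto
        (fun δ : ℂ =>
          PhiInv δ (s4A7 (Phi δ ((X,Y,Z,W,T),(A0,A1,A2,A3)))))
        (𝓝[≠] 0)
        (𝓝 (((X, Y, Z, W - A3/Z, T), (A0, A1, A2+A3, -A3)) : StC3))) := by
  refine ⟨?_, ?_, ?_, ?_, ?_⟩
  · -- part (i)
    intro δ hδ
    have hδ2 : δ^2 ≠ 0 := pow_ne_zero _ hδ
    refine ⟨?_, ?_, ?_, ?_⟩ <;>
      simp only [Phi, s0A7, s1A7, s2A7, s3A7, s4A7, PhiInv, Prod.mk.injEq] <;>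
      constructorm* _ ∧ _ <;> first | rfl | trivial | (field_simp; ring1) | (field_simp; rw [Complex.I_sq]; ring1) | field_simp
  · -- S0
    intro hY
    have hI : (I:ℂ) ≠ 0 := Complex.I_ne_zero
    have hden : Tendsto (fun δ : ℂ => Y - δ^2) (𝓝[≠] 0) (𝓝 Y) := by
      have h : Tendsto (fun δ : ℂ => Y - δ^2) (𝓝 0) (𝓝 (Y - 0^2)) :=
        Filter.Tendsto.const_sub _ ((continuous_pow 2).tendsto 0)
      simpa using h.mono_left nhdsWithin_le_nhds
    have hne : ∀ᶠ δ in 𝓝[≠](0:ℂ), Y - δ^2 ≠ 0 := hden.eventually_ne hY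
    have heq : ∀ᶠ δ in 𝓝[≠](0:ℂ),
        PhiInv (-(I*δ)) (s1A7 (s0A7 (Phi δ ((X,Y,Z,W,T),(A0,A1,A2,A3)))))
          = (((-X - (A0*Y+1)/(Y*(Y-δ^2)), -Y, I*Z, W/I, -T),
              (-A0, A1+A0, A2, A3)) : StC3) := by
      filter_upwards [self_mem_nhdsWithin, hne] with δ hδ h2
      have hδ : δ ≠ 0 := hδ
      have hδ2 : δ^2 ≠ 0 := pow_ne_zero _ hδ
      simp only [Phi, s0A7, s1A7, PhiInv, Prod.mk.injEq]
      rw [show Y/δ^2 - 1 = (Y-δ^2)/δ^2 from by field_simp,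
        show δ*Z/(-(I*δ)) = I*Z from by
          field_simp; linear_combination (-Z)*Complex.I_mul_I,
        show -(I*δ)*(W/δ) = W/I from by
          rw [div_eq_mul_inv W I, Complex.inv_I]; field_simp]
      constructorm* _ ∧ _ <;> first | rfl | trivial | (field_simp; ring1) | (field_simp; rw [Complex.I_sq]; ring1) | field_simp
    refine Filter.Tendsto.congr' (Filter.EventuallyEq.symm heq) ?_
    have hX1 : Tendsto (fun δ : ℂ => -X - (A0*Y+1)/(Y*(Y-δ^2))) (𝓝[≠] 0)
        (𝓝 (-(X + A0/Y + 1/Y^2))) := by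
      have h2 : Tendsto (fun δ : ℂ => Y*(Y-δ^2)) (𝓝[≠] 0) (𝓝 (Y*Y)) :=
        tendsto_const_nhds.mul hden
      have h3 : Tendsto (fun δ : ℂ => -X - (A0*Y+1)/(Y*(Y-δ^2))) (𝓝[≠] 0)
          (𝓝 (-X - (A0*Y+1)/(Y*Y))) :=
        tendsto_const_nhds.sub (tendsto_const_nhds.div h2 (mul_ne_zero hY hY))
      have e : -(X + A0/Y + 1/Y^2) = -X - (A0*Y+1)/(Y*Y) := by field_simp; ring
      rw [e]; exact h3
    exact Filter.Tendsto.prodMk_nhds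
      (hX1.prodMk_nhds (tendsto_const_nhds.prodMk_nhds
        (tendsto_const_nhds.prodMk_nhds
          (tendsto_const_nhds.prodMk_nhds tendsto_const_nhds))))
      tendsto_const_nhds
  · -- S1
    intro hX
    have h1 : Tendsto (fun δ : ℂ => 1 - A1*δ^2) (𝓝[≠] 0) (𝓝 1) := by
      have h : Tendsto (fun δ : ℂ => 1 - A1*δ^2) (𝓝 0) (𝓝 (1 - A1*0^2)) :=
        Filter.Tendsto.const_sub _ (((continuous_pow 2).tendsto 0).const_mul A1)
      simpa using h.mono_left nhdsWithin_le_nhds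
    have hne : ∀ᶠ δ in 𝓝[≠](0:ℂ), 1 - A1*δ^2 ≠ 0 := h1.eventually_ne one_ne_zero
    have hc : Tendsto (fun δ : ℂ => (1 - A1*δ^2) ^ (-(1:ℂ)/2)) (𝓝[≠] 0) (𝓝 1) := by
      have := Filter.Tendsto.cpow h1 (tendsto_const_nhds (x := (-(1:ℂ)/2)))
        Complex.one_mem_slitPlane
      simpa using this
    have heq : ∀ᶠ δ in 𝓝[≠](0:ℂ),
        PhiInv (δ * (1 - A1*δ^2) ^ (-(1:ℂ)/2))
            (s2A7 (Phi δ ((X,Y,Z,W,T),(A0,A1,A2,A3))))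
          = ((((1-A1*δ^2)*X, (Y-A1/X)/(1-A1*δ^2),
                Z*((1-A1*δ^2) ^ (-(1:ℂ)/2))⁻¹, W*(1-A1*δ^2) ^ (-(1:ℂ)/2),
                T/(1-A1*δ^2)),
              (A0+2*A1, -A1, A2+A1, A3)) : StC3) := by
      filter_upwards [self_mem_nhdsWithin, hne] with δ hδ h2
      have hδ : δ ≠ 0 := hδ
      have hδ2 : δ^2 ≠ 0 := pow_ne_zero _ hδ
      have hc0 : (1 - A1*δ^2) ^ (-(1:ℂ)/2) ≠ 0 := by
        simp [Complex.cpow_eq_zero_iff, h2]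
      simp only [Phi, s2A7, PhiInv, Prod.mk.injEq]
      rw [show -(1/δ^2) + A1 = -((1 - A1*δ^2)/δ^2) from by field_simp; ring]
      have h3 : -((1 - A1*δ^2)/δ^2) ≠ 0 := neg_ne_zero.mpr (div_ne_zero h2 hδ2)
      have h4 : A1*δ^2 - 1 ≠ 0 := by intro h; apply h2; linear_combination -h
      constructorm* _ ∧ _ <;> first | rfl | trivial | (field_simp; ring1) | (field_simp; rw [Complex.I_sq]; ring1) | field_simp
    refine Filter.Tendsto.congr' (Filter.EventuallyEq.symm heq) ?_
    have t1 : Tendsto (fun δ : ℂ => (1-A1*δ^2)*X) (𝓝[≠] 0) (𝓝 X) := by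
      simpa using h1.mul_const X
    have t2 : Tendsto (fun δ : ℂ => (Y-A1/X)/(1-A1*δ^2)) (𝓝[≠] 0) (𝓝 (Y-A1/X)) := by
      simpa [Pi.div_def] using tendsto_const_nhds.div h1 one_ne_zero
    have t3 : Tendsto (fun δ : ℂ => Z*((1-A1*δ^2) ^ (-(1:ℂ)/2))⁻¹) (𝓝[≠] 0) (𝓝 Z) := by
      simpa using (hc.inv₀ one_ne_zero).const_mul Z
    have t4 : Tendsto (fun δ : ℂ => W*(1-A1*δ^2) ^ (-(1:ℂ)/2)) (𝓝[≠] 0) (𝓝 W) := by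
      simpa using hc.const_mul W
    have t5 : Tendsto (fun δ : ℂ => T/(1-A1*δ^2)) (𝓝[≠] 0) (𝓝 T) := by
      simpa [Pi.div_def] using tendsto_const_nhds.div h1 one_ne_zero
    exact Filter.Tendsto.prodMk_nhds
      (t1.prodMk_nhds (t2.prodMk_nhds (t3.prodMk_nhds (t4.prodMk_nhds t5))))
      tendsto_const_nhds
  · -- S2
    intro hD
    have heq : ∀ᶠ δ in 𝓝[≠](0:ℂ),
        PhiInv δ (s3A7 (Phi δ ((X,Y,Z,W,T),(A0,A1,A2,A3))))
          = (((X + A2/(Y + W^2 - T), Y, Z + 2*A2*W/(Y + W^2 - T), W, T),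
              (A0, A1+A2, -A2, A3+2*A2)) : StC3) := by
      filter_upwards [self_mem_nhdsWithin] with δ hδ
      have hδ : δ ≠ 0 := hδ
      have hδ2 : δ^2 ≠ 0 := pow_ne_zero _ hδ
      simp only [Phi, s3A7, PhiInv, Prod.mk.injEq]
      rw [show Y/δ^2 + (W/δ)^2 - T/δ^2 = (Y + W^2 - T)/δ^2 from by rw [div_pow]; ring]
      constructorm* _ ∧ _ <;> first | rfl | trivial | (field_simp; ring1) | (field_simp; rw [Complex.I_sq]; ring1) | field_simp
    exact Filter.Tendsto.congr' (Filter.EventuallyEq.symm heq) tendsto_const_nhds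
  · -- S3
    intro hZ
    have heq : ∀ᶠ δ in 𝓝[≠](0:ℂ),
        PhiInv δ (s4A7 (Phi δ ((X,Y,Z,W,T),(A0,A1,A2,A3))))
          = (((X, Y, Z, W - A3/Z, T), (A0, A1, A2+A3, -A3)) : StC3) := by
      filter_upwards [self_mem_nhdsWithin] with δ hδ
      have hδ : δ ≠ 0 := hδ
      have hδ2 : δ^2 ≠ 0 := pow_ne_zero _ hδ
      simp only [Phi, s4A7, PhiInv, Prod.mk.injEq]
      constructorm* _ ∧ _ <;> first | rfl | trivial | (field_simp; ring1) | (field_simp; rw [Complex.I_sq]; ring1) | field_simp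
    exact Filter.Tendsto.congr' (Filter.EventuallyEq.symm heq) tendsto_const_nhds
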